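/- For a limit ordinal λ < ε₀ and natural numbers x < y, one has λ_x ⊏_y λ_y, where ⊏_y is the pointwise-at-y ordering. Consequently, ⊏_x ⊆ ⊏_y whenever x ≤ y. -/

import Mathlib

/-- Ordinal terms below ε₀: a term is a list of exponents,
`cons β γ` denoting ω^β + γ. -/
inductive OT : Type
  | nil : OT
  | cons : OT → OT → OT
deriving DecidableEq

namespace OT

/-- The term 1 = ω^0. -/
def one : OT := cons nil nil

/-- Syntactic concatenation (direct sum) of ordinal terms. -/
def add : OT → OT → OT
  | nil, b => b
  | cons e r, b => cons e (add r b)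

/-- A term ω^{β₁}+...+ω^{β_m} is a successor iff m > 0 and β_m = 0. -/
def isSucc : OT → Bool
  | nil => false
  | cons e nil => e == nil
  | cons _ (cons e r) => isSucc (cons e r)

/-- Remove the last summand ω^0 of a successor term. -/
def pred : OT → OT
  | nil => nil
  | cons _ nil => nil
  | cons e (cons e' r) => cons e (pred (cons e' r))

/-- Limit terms. -/
def isLim (a : OT) : Prop := a ≠ nil ∧ isSucc a = false

/-- ω^β · n as an ordinal term. -/
def rep : ℕ → OT → OT
  | 0, _ => nil
  | n + 1, β => cons β (rep n β)

/-- The standard assignment of fundamental sequences (with ω_x = x+1):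
(γ+ω^{β+1})_x = γ+ω^β·(x+1) and (γ+ω^λ)_x = γ+ω^{λ_x}. -/
def fseq : OT → ℕ → OT
  | nil, _ => nil
  | cons β nil, x =>
      if β = nil then nil
      else if isSucc β then rep (x + 1) (pred β)
      else cons (fseq β x) nil
  | cons β (cons e r), x => cons β (fseq (cons e r) x)

/-- Syntactic ordering of terms (on CNF terms this is the ordinal ordering). -/
def lt : OT → OT → Prop
  | _, nil => False
  | nil, cons _ _ => True
  | cons a r, cons b s => lt a b ∨ (a = b ∧ lt r s)

def le (a b : OT) : Prop := lt a b ∨ a = b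

/-- Cantor normal form: exponents weakly decreasing, all in CNF. -/
def isCNF : OT → Prop
  | nil => True
  | cons b nil => isCNF b
  | cons b (cons e r) => isCNF b ∧ le e b ∧ isCNF (cons e r)

/-- Number of occurrences of the exponent β in a term. -/
def count (β : OT) : OT → ℕ
  | nil => 0
  | cons b r => (if b = β then 1 else 0) + count β r

/-- k-lean: every coefficient (at every level) is ≤ k. -/
def leanOrd (k : ℕ) : OT → Prop
  | nil => True
  | cons b r => count b (cons b r) ≤ k ∧ leanOrd k b ∧ leanOrd k r

end OT

/-- Pointwise-at-x ordering: smallest transitive relation with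
α ⊏_x α+1 and λ_x ⊏_x λ. -/
inductive Ptw (x : ℕ) : OT → OT → Prop
  | succ (a : OT) : Ptw x a (OT.add a OT.one)
  | lim (l : OT) : OT.isLim l → Ptw x (OT.fseq l x) l
  | trans {a b c : OT} : Ptw x a b → Ptw x b c → Ptw x a c

namespace OT

lemma add_one_ne_nil (a : OT) : add a one ≠ nil := by
  cases a <;> simp [add, one]

lemma isSucc_add_one (a : OT) : isSucc (add a one) = true := by
  induction a with
  | nil => rfl
  | cons e r ihe ihr =>
    cases r with
    | nil => rfl
    | cons e' s => simpa [add, isSucc] using ihr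

lemma pred_add_one (a : OT) : pred (add a one) = a := by
  induction a with
  | nil => rfl
  | cons e r ihe ihr =>
    cases r with
    | nil => rfl
    | cons e' s => show cons e (pred (add (cons e' s) one)) = _ ; rw [ihr]

lemma add_pred (a : OT) (h : isSucc a = true) : add (pred a) one = a := by
  induction a with
  | nil => simp [isSucc] at h
  | cons e r ihe ihr =>
    cases r with
    | nil =>
      have : e = nil := by simpa [isSucc] using h
      subst this; rfl
    | cons e' s =>
      have h' : isSucc (cons e' s) = true := h
      show cons e (add (pred (cons e' s)) one) = _
      rw [ihr h']

lemma Ptw.prepend {y : ℕ} {a b : OT} (p : OT) (h : Ptw y a b) :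
    Ptw y (cons p a) (cons p b) := by
  induction h with
  | succ a =>
    have : cons p (add a one) = add (cons p a) one := rfl
    rw [this]; exact Ptw.succ _
  | lim l hl =>
    obtain ⟨hne, hs⟩ := hl
    cases l with
    | nil => exact absurd rfl hne
    | cons e r =>
      have hlim : isLim (cons p (cons e r)) := ⟨by simp, hs⟩
      have := Ptw.lim (x := y) (cons p (cons e r)) hlim
      simpa [fseq] using this
  | trans _ _ ih1 ih2 => exact ih1.trans ih2

/-- A measure decreasing along `fseq · y` and `pred`. -/
def F (y : ℕ) : OT → ℕ
  | nil => 0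
  | cons b r => (y + 2) ^ (F y b) + F y r

lemma F_pos (y : ℕ) {a : OT} (ha : a ≠ nil) : 0 < F y a := by
  cases a with
  | nil => exact absurd rfl ha
  | cons b r =>
    have : 0 < (y+2) ^ (F y b) := Nat.pow_pos (by omega)
    simp only [F]; omega

lemma F_rep (y n : ℕ) (p : OT) : F y (rep n p) = n * (y + 2) ^ (F y p) := by
  induction n with
  | zero => simp [rep, F]
  | succ n ih => simp only [rep, F, ih]; ring

lemma F_pred_lt (y : ℕ) {a : OT} (h : isSucc a = true) : F y (pred a) < F y a := by
  induction a with
  | nil => simp [isSucc] at h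
  | cons e r ihe ihr =>
    cases r with
    | nil =>
      have : 0 < (y+2) ^ (F y e) := Nat.pow_pos (by omega)
      simp only [pred, F]; omega
    | cons e' s =>
      have h' : isSucc (cons e' s) = true := h
      have := ihr h'
      simp [pred, F] at this ⊢
      omega

lemma F_fseq_lt (y : ℕ) : ∀ l : OT, l ≠ nil → F y (fseq l y) < F y l := by
  intro l
  induction l with
  | nil => intro h; exact absurd rfl h
  | cons β r ihβ ihr =>
    intro _
    cases r with
    | nil =>
      by_cases hβ : β = nil
      · subst hβ
        have : 0 < (y+2) ^ (F y (nil : OT)) := Nat.pow_pos (by omega)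
        simp [fseq, F]
      · cases hs : isSucc β with
        | true =>
          have hp : F y (pred β) + 1 ≤ F y β := F_pred_lt y hs
          have key : (y + 1) * (y + 2) ^ (F y (pred β)) < (y + 2) ^ (F y β) := by
            calc (y + 1) * (y + 2) ^ (F y (pred β))
                < (y + 2) * (y + 2) ^ (F y (pred β)) := by
                  have : 0 < (y+2) ^ (F y (pred β)) := Nat.pow_pos (by omega)
                  exact (Nat.mul_lt_mul_right this).mpr (by omega)
              _ = (y + 2) ^ (F y (pred β) + 1) := by ring
              _ ≤ (y + 2) ^ (F y β) := Nat.pow_le_pow_right (by omega) hp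
          simp [fseq, hβ, hs, F, F_rep]
          omega
        | false =>
          have := ihβ hβ
          have key : (y+2) ^ (F y (fseq β y)) < (y+2) ^ (F y β) :=
            Nat.pow_lt_pow_right (by omega) this
          simp [fseq, hβ, hs, F]
          omega
    | cons e s =>
      have := ihr (by simp)
      simp [fseq, F] at this ⊢
      omega

lemma zero_ptw (y : ℕ) : ∀ n a, F y a ≤ n → a ≠ nil → Ptw y nil a := by
  intro n
  induction n with
  | zero => intro a h ha; exact absurd (F_pos y ha) (by omega)
  | succ n ih =>
    intro a h ha
    cases hs : isSucc a with
    | true =>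
      have he := add_pred a hs
      by_cases hp : pred a = nil
      · rw [← he, hp]; exact Ptw.succ nil
      · have h1 : Ptw y nil (pred a) :=
          ih (pred a) (by have := F_pred_lt y hs; omega) hp
        have h2 : Ptw y (pred a) a := by
          conv_rhs => rw [← he]
          exact Ptw.succ _
        exact h1.trans h2
    | false =>
      have hstep : Ptw y (fseq a y) a := Ptw.lim a ⟨ha, hs⟩
      by_cases hf : fseq a y = nil
      · rwa [hf] at hstep
      · exact (ih (fseq a y) (by have := F_fseq_lt y a ha; omega) hf).trans hstep

lemma rep_step (y n : ℕ) (p : OT) : Ptw y (rep n p) (rep (n+1) p) := by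
  induction n with
  | zero => exact zero_ptw y (F y (rep 1 p)) (rep 1 p) le_rfl (by simp [rep])
  | succ n ih => exact Ptw.prepend p ih

lemma rep_mono (y : ℕ) {n m : ℕ} (h : n < m) (p : OT) :
    Ptw y (rep n p) (rep m p) := by
  induction m with
  | zero => omega
  | succ m ih =>
    rcases Nat.lt_or_ge n m with h' | h'
    · exact (ih h').trans (rep_step y m p)
    · have : n = m := by omega
      subst this; exact rep_step y n p

lemma exp_mono {y : ℕ} {a b : OT} (h : Ptw y a b) :
    Ptw y (cons a nil) (cons b nil) := by
  induction h with
  | succ a =>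
    have hlim : isLim (cons (add a one) nil) :=
      ⟨by simp, by simpa [isSucc] using add_one_ne_nil a⟩
    have hf : fseq (cons (add a one) nil) y = rep (y+1) a := by
      simp [fseq, add_one_ne_nil a, isSucc_add_one, pred_add_one]
    have hl : Ptw y (rep (y+1) a) (cons (add a one) nil) := hf ▸ Ptw.lim _ hlim
    cases y with
    | zero => exact hl
    | succ k =>
      have h1 : Ptw (k+1) (rep 1 a) (rep (k+2) a) := rep_mono (k+1) (by omega) a
      exact h1.trans hl
  | lim l hl =>
    obtain ⟨hne, hs⟩ := hl
    have hlim : isLim (cons l nil) := ⟨by simp, by simpa [isSucc] using hne⟩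
    have hf : fseq (cons l nil) y = cons (fseq l y) nil := by
      simp [fseq, hne, hs]
    exact hf ▸ Ptw.lim _ hlim
  | trans _ _ ih1 ih2 => exact ih1.trans ih2

lemma fseq_mono : ∀ (l : OT) (x y : ℕ), isLim l → x < y →
    Ptw y (fseq l x) (fseq l y) := by
  intro l
  induction l with
  | nil => intro x y h; exact absurd rfl h.1
  | cons β r ihβ ihr =>
    intro x y hl hxy
    cases r with
    | nil =>
      have hβ : β ≠ nil := by
        intro h; subst h; simpa [isSucc] using hl.2
      cases hs : isSucc β with
      | true =>
        simp only [fseq, if_neg hβ, hs, if_true]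
        exact rep_mono y (by omega) (pred β)
      | false =>
        simp only [fseq, if_neg hβ, hs, if_false]
        exact exp_mono (ihβ x y ⟨hβ, hs⟩ hxy)
    | cons e s =>
      have hlim : isLim (cons e s) := ⟨by simp, hl.2⟩
      simpa [fseq] using Ptw.prepend β (ihr x y hlim hxy)

end OT

/-- For a limit λ and x < y, λ_x ⊏_y λ_y; consequently ⊏_x ⊆ ⊏_y for x ≤ y. -/
theorem stmt16 :
    (∀ (l : OT) (x y : ℕ), OT.isLim l → x < y →
      Ptw y (OT.fseq l x) (OT.fseq l y)) ∧
    (∀ x y : ℕ, x ≤ y → ∀ a b : OT, Ptw x a b → Ptw y a b) := by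
  constructor
  · exact OT.fseq_mono
  · intro x y hxy a b h
    induction h with
    | succ a => exact Ptw.succ a
    | lim l hl =>
      rcases Nat.lt_or_ge x y with h' | h'
      · exact (OT.fseq_mono l x y hl h').trans (Ptw.lim l hl)
      · have : x = y := le_antisymm hxy h'
        subst this; exact Ptw.lim l hl
    | trans _ _ ih1 ih2 => exact ih1.trans ih2
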